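/- arXiv:2401.04959 — 7 statements merged into one kernel-verified Lean document; each statement's English description precedes it below -/
import Mathlib

section
/- For a = 1, the elephant polynomial R_n equals the n-th Chebyshev polynomial of the first kind: R_n(cos t) = cos(n t) for all real t and all n ≥ 1. -/
open Polynomial

/-- The elephant polynomials: `R a 1 = X` and
`R a (n+1) = X * R a n - (a/n) * (1 - X^2) * (R a n)'` for `n ≥ 1`. -/
noncomputable def elephantR (a : ℝ) : ℕ → Polynomial ℝ
  | 0 => 1
  | 1 => X
  | n + 2 => X * elephantR a (n + 1) -
      C (a / ((n : ℝ) + 1)) * ((1 - X ^ 2) * (elephantR a (n + 1)).derivative)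

lemma elephantR_eq_T : ∀ k : ℕ, elephantR 1 (k + 1) = Polynomial.Chebyshev.T ℝ (k + 1) := by
  intro k
  induction k with
  | zero => simp [elephantR, Polynomial.Chebyshev.T_one]
  | succ k ih =>
    have hkey := Polynomial.Chebyshev.one_sub_X_sq_mul_derivative_T_eq_poly_in_T (R := ℝ) (k : ℤ)
    have hT2 := Polynomial.Chebyshev.T_add_two ℝ (k : ℤ)
    have hne : ((k : ℝ) + 1) ≠ 0 := by positivity
    have hcast : ((k : ℤ) : ℝ[X]) + 1 = C ((k : ℝ) + 1) := by simp
    rw [hcast] at hkey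
    show X * elephantR 1 (k + 1) -
        C (1 / ((k : ℝ) + 1)) * ((1 - X ^ 2) * (elephantR 1 (k + 1)).derivative) = _
    rw [ih]
    have hidx : (((k + 1 : ℕ) : ℤ)) + 1 = (k : ℤ) + 2 := by push_cast; ring
    rw [hidx]
    have h2 : C (1 / ((k : ℝ) + 1)) *
        ((1 - X ^ 2) * derivative (Polynomial.Chebyshev.T ℝ ((k : ℤ) + 1))) =
        Polynomial.Chebyshev.T ℝ k - X * Polynomial.Chebyshev.T ℝ ((k : ℤ) + 1) := by
      rw [hkey, ← mul_assoc, ← C_mul, one_div, inv_mul_cancel₀ hne, C_1, one_mul]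
    rw [h2, hT2]
    ring

theorem stmt_5 (n : ℕ) (hn : 1 ≤ n) :
    elephantR 1 n = Polynomial.Chebyshev.T ℝ n ∧
    ∀ t : ℝ, (elephantR 1 n).eval (Real.cos t) = Real.cos (n * t) := by
  obtain ⟨k, rfl⟩ : ∃ k, n = k + 1 := ⟨n - 1, by omega⟩
  have h := elephantR_eq_T k
  have h' : elephantR 1 (k + 1) = Polynomial.Chebyshev.T ℝ ((k + 1 : ℕ) : ℤ) := by
    rw [h]; norm_num
  refine ⟨h', fun t => ?_⟩
  rw [h', Polynomial.Chebyshev.T_real_cos]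
  push_cast
  ring_nf
end

section
/- For a = −1, the elephant polynomial R_n has degree n − 2 for all n ≥ 2, with leading coefficient 2^{n−2}/(n−1)!. -/
open Polynomial
lemma elephant_aux (n : ℕ) :
    (elephantR (-1) (n+2)).degree = (n : ℕ) ∧
    (elephantR (-1) (n+2)).leadingCoeff = 2 ^ n / (n+1).factorial := by
  induction n with
  | zero =>
    have h : elephantR (-1) 2 = 1 := by
      show X * X - C ((-1:ℝ) / ((0:ℕ) + 1)) * ((1 - X ^ 2) * derivative (X:Polynomial ℝ)) = 1
      simp; ring
    rw [h]; simp
  | succ n ih =>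
    obtain ⟨hd, hc⟩ := ih
    set p := elephantR (-1) (n+2) with hp
    set c : ℝ := 2 ^ n / (n+1).factorial with hcdef
    have hcpos : 0 < c := by positivity
    have hp0 : p ≠ 0 := fun h => by simp [h] at hd
    have hnat : p.natDegree = n := natDegree_eq_of_degree_eq_some hd
    have hcn : p.coeff n = c := by rw [← hnat]; exact hc
    have hRdef : elephantR (-1) (n+3) =
        X * p - C ((-1) / (((n+1 : ℕ) : ℝ) + 1)) * ((1 - X ^ 2) * p.derivative) := rfl
    -- degree bound
    have hdX2 : (1 - X ^ 2 : Polynomial ℝ).degree = 2 := by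
      compute_degree!
    have hQ : ((1 - X ^ 2) * p.derivative).degree ≤ ((n+1 : ℕ) : WithBot ℕ) := by
      refine (degree_mul_le _ _).trans ?_
      rw [hdX2]
      have h1 : p.derivative.degree < (n : WithBot ℕ) := hd ▸ degree_derivative_lt hp0
      have h2 : p.derivative.degree + 1 ≤ (n : WithBot ℕ) := Nat.WithBot.add_one_le_of_lt h1
      calc (2 : WithBot ℕ) + p.derivative.degree = p.derivative.degree + 1 + 1 := by
            ring
        _ ≤ (n : WithBot ℕ) + 1 := add_le_add h2 (le_refl 1)
        _ = ((n+1 : ℕ) : WithBot ℕ) := by push_cast; ring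
    have hle : (elephantR (-1) (n+3)).degree ≤ ((n+1 : ℕ) : WithBot ℕ) := by
      rw [hRdef]
      refine (degree_sub_le _ _).trans (max_le ?_ ?_)
      · refine (degree_mul_le _ _).trans ?_
        rw [degree_X, hd]
        push_cast; rw [add_comm]
      · refine (degree_mul_le _ _).trans ?_
        calc (C ((-1:ℝ) / (((n+1 : ℕ) : ℝ) + 1))).degree + ((1 - X ^ 2) * p.derivative).degree
            ≤ 0 + ((n+1 : ℕ) : WithBot ℕ) := add_le_add degree_C_le hQ
          _ = ((n+1 : ℕ) : WithBot ℕ) := zero_add _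
    -- coefficient computation
    have hQc : ((1 - X ^ 2) * p.derivative).coeff (n+1) = -(n * c) := by
      rw [sub_mul, one_mul, Polynomial.coeff_sub]
      have h1 : p.derivative.coeff (n+1) = 0 := by
        rw [coeff_derivative]
        rw [coeff_eq_zero_of_natDegree_lt (by omega : p.natDegree < n+1+1)]
        ring
      have h2 : (X ^ 2 * p.derivative).coeff (n+1) = (n : ℝ) * c := by
        rw [mul_comm, coeff_mul_X_pow']
        cases n with
        | zero => simp
        | succ m =>
          simp only [show m + 1 + 1 - 2 = m from rfl]
          rw [if_pos (by omega)]
          rw [coeff_derivative, hcn]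
          push_cast; ring
      rw [h1, h2]; ring
    have hcoeff : (elephantR (-1) (n+3)).coeff (n+1) = 2 / ((n:ℝ)+2) * c := by
      rw [hRdef, Polynomial.coeff_sub, coeff_X_mul, hcn, Polynomial.coeff_C_mul, hQc]
      have : ((n:ℝ)+2) ≠ 0 := by positivity
      push_cast
      field_simp
      ring
    have hval : 2 / ((n:ℝ)+2) * c = 2 ^ (n+1) / (n+1+1).factorial := by
      have hfac : (((n+1+1).factorial : ℕ) : ℝ) = ((n:ℝ)+2) * (n+1).factorial := by
        rw [Nat.factorial_succ]; push_cast; ring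
      have h1 : ((n+1).factorial : ℝ) ≠ 0 := by positivity
      have h2 : ((n:ℝ)+2) ≠ 0 := by positivity
      rw [hcdef, hfac]
      field_simp
      ring
    have hne : (elephantR (-1) (n+3)).coeff (n+1) ≠ 0 := by
      rw [hcoeff]; positivity
    have hdeg : (elephantR (-1) (n+3)).degree = ((n+1 : ℕ) : WithBot ℕ) :=
      le_antisymm hle (le_degree_of_ne_zero hne)
    refine ⟨hdeg, ?_⟩
    rw [Polynomial.leadingCoeff, natDegree_eq_of_degree_eq_some hdeg, hcoeff, hval]

theorem stmt_6 (n : ℕ) (hn : 2 ≤ n) :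
    (elephantR (-1) n).degree = (n - 2 : ℕ) ∧
    (elephantR (-1) n).leadingCoeff = 2 ^ (n - 2) / (n - 1).factorial := by
  obtain ⟨k, rfl⟩ : ∃ k, n = k + 2 := ⟨n - 2, by omega⟩
  have := elephant_aux k
  simpa using this
end

section
/- For a = −1/2, the elephant polynomial satisfies R_n(x) = ((x−1)/2)^n + ((x+1)/2)^n for all n ≥ 1. -/
open Polynomial

theorem stmt_7 (n : ℕ) (hn : 1 ≤ n) :
    elephantR (-1/2) n =
      (C (1/2 : ℝ) * (X - 1)) ^ n + (C (1/2 : ℝ) * (X + 1)) ^ n := by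
  obtain ⟨m, rfl⟩ := Nat.exists_eq_add_of_le hn
  clear hn
  induction m with
  | zero =>
      apply Polynomial.funext
      intro x
      simp [elephantR]
      ring
  | succ k ih =>
      rw [show 1 + (k + 1) = k + 2 from by ring, elephantR,
        show k + 2 = k + 1 + 1 from rfl]
      rw [show (1 : ℕ) + k = k + 1 from by ring] at ih
      rw [ih]
      apply Polynomial.funext
      intro x
      have hk : ((k : ℝ) + 1) ≠ 0 := by positivity
      simp [derivative_pow, eval_mul, eval_add, eval_sub, eval_pow, mul_comm]
      field_simp
      ring
end

section
/- For a = −1/2, the elephant polynomial admits the expansion R_n(x) = 2^{−(n−1)} · Σ_{k=0}^{⌊n/2⌋} C(n, 2k) · x^{n−2k}, where C(n,2k) is a binomial coefficient. -/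
open Polynomial

lemma elephant_closed (n : ℕ) (hn : 1 ≤ n) :
    elephantR (-1/2) n = C ((2:ℝ)^n)⁻¹ * ((X+1)^n + (X-1)^n) := by
  induction n, hn using Nat.le_induction with
  | base =>
      show (X : Polynomial ℝ) = _
      apply Polynomial.funext
      intro x
      simp
      ring
  | succ n hn ih =>
      obtain ⟨m, rfl⟩ : ∃ m, n = m + 1 := ⟨n - 1, by omega⟩
      show X * elephantR (-1/2) (m+1) -
        C ((-1/2) / ((m : ℝ) + 1)) * ((1 - X ^ 2) * (elephantR (-1/2) (m+1)).derivative) = _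
      rw [ih]
      simp only [derivative_mul, derivative_C, derivative_add, derivative_pow, derivative_X,
        derivative_one, zero_mul, add_zero, mul_one, zero_add, Nat.add_sub_cancel]
      apply Polynomial.funext
      intro x
      have hm : (m:ℝ) + 1 ≠ 0 := by positivity
      simp [mul_comm]
      field_simp
      ring

lemma sum_eq (n : ℕ) :
    (X+1:Polynomial ℝ)^n + (X-1)^n
      = 2 * ∑ k ∈ Finset.range (n / 2 + 1), C (n.choose (2 * k) : ℝ) * X ^ (n - 2 * k) := by
  have h1 : (X+1:Polynomial ℝ)^n
      = ∑ j ∈ Finset.range (n+1), C ((1:ℝ) * n.choose j) * X ^ j := by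
    rw [add_pow]
    refine Finset.sum_congr rfl fun j hj => ?_
    simp [mul_comm]
  have h2 : (X-1:Polynomial ℝ)^n
      = ∑ j ∈ Finset.range (n+1), C ((-1:ℝ)^(n-j) * n.choose j) * X ^ j := by
    rw [sub_eq_add_neg, add_pow]
    refine Finset.sum_congr rfl fun j hj => ?_
    have : ((-1:Polynomial ℝ))^(n-j) = C ((-1:ℝ)^(n-j)) := by
      rw [← C_1, ← C_neg, ← C_pow]
    rw [this, C_mul, ← C_eq_natCast]
    ring
  rw [h1, h2, ← Finset.sum_add_distrib]
  have h3 : ∀ j, (C ((1:ℝ) * n.choose j) * X ^ j + C ((-1:ℝ)^(n-j) * n.choose j) * X ^ j : Polynomial ℝ)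
      = C ((1 + (-1:ℝ)^(n-j)) * n.choose j) * X ^ j := by
    intro j; rw [← add_mul, ← C_add]; ring_nf
  simp only [h3]
  rw [Finset.mul_sum]
  rw [← Finset.sum_filter_of_ne (p := fun j => Even (n - j))]
  · refine Finset.sum_nbij' (fun j => (n - j) / 2) (fun k => n - 2 * k) ?_ ?_ ?_ ?_ ?_
    · intro j hj
      simp only [Finset.mem_filter, Finset.mem_range] at hj ⊢
      obtain ⟨hj1, e, he⟩ := hj
      omega
    · intro k hk
      simp only [Finset.mem_filter, Finset.mem_range] at hk ⊢
      exact ⟨by omega, ⟨k, by omega⟩⟩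
    · intro j hj
      simp only [Finset.mem_filter, Finset.mem_range] at hj
      obtain ⟨hj1, e, he⟩ := hj
      omega
    · intro k hk
      simp only [Finset.mem_range] at hk
      omega
    · intro j hj
      simp only [Finset.mem_filter, Finset.mem_range] at hj
      obtain ⟨hj1, e, he⟩ := hj
      have h2k : 2 * ((n - j) / 2) = n - j := by omega
      rw [h2k]
      have hjn : j ≤ n := by omega
      have hch : n.choose (n - j) = n.choose j := Nat.choose_symm hjn
      have hev : (-1:ℝ)^(n - j) = 1 := by
        rw [show n - j = 2 * e by omega, pow_mul]
        norm_num
      rw [hch, hev, show n - (n - j) = j by omega]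
      rw [C_mul, show ((1:ℝ)+1) = 2 by norm_num, map_ofNat]
      ring
  · intro j hj hne
    by_contra hodd
    apply hne
    have : (-1:ℝ)^(n-j) = -1 := by
      rcases Nat.even_or_odd (n - j) with h | h
      · exact absurd h hodd
      · exact h.neg_one_pow
    rw [this]
    norm_num

theorem stmt_9 (n : ℕ) (hn : 1 ≤ n) :
    elephantR (-1/2) n =
      C ((2 : ℝ) ^ (n - 1))⁻¹ *
        ∑ k ∈ Finset.range (n / 2 + 1), C (n.choose (2 * k) : ℝ) * X ^ (n - 2 * k) := by
  rw [elephant_closed n hn, sum_eq]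
  rw [← mul_assoc]
  congr 1
  obtain ⟨m, rfl⟩ : ∃ m, n = m + 1 := ⟨n - 1, by omega⟩
  rw [show ((2:ℝ)^(m+1))⁻¹ = (2^m)⁻¹ * 2⁻¹ by rw [pow_succ]; ring]
  rw [C_mul, Nat.add_sub_cancel]
  rw [mul_assoc]
  norm_num
  rw [show (2:Polynomial ℝ) = C 2 from (map_ofNat C 2).symm, ← C_mul]
  norm_num
end

section
/- For every a ≥ 0 and every n ≥ 1, the coefficients of the elephant polynomial R_n have alternating signs: the coefficient of x^{n−2k} has sign (−1)^k (it is ≥ 0 if k is even and ≤ 0 if k is odd). -/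
open Polynomial

lemma elephantR_natDegree_le (a : ℝ) : ∀ n, (elephantR a n).natDegree ≤ n
  | 0 => by simp [elephantR]
  | 1 => by simp [elephantR, natDegree_X_le]
  | n + 2 => by
    rw [elephantR]
    refine le_trans (natDegree_sub_le _ _) (max_le ?_ ?_)
    · exact le_trans (natDegree_mul_le) (by
        have := elephantR_natDegree_le a (n+1)
        have := natDegree_X_le (R := ℝ)
        omega)
    · refine le_trans (natDegree_C_mul_le _ _) ?_
      refine le_trans (natDegree_mul_le) ?_
      have h1 : (1 - X ^ 2 : Polynomial ℝ).natDegree ≤ 2 := by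
        refine le_trans (natDegree_sub_le _ _) (max_le (by simp) (by simp))
      have h2 : ((elephantR a (n+1)).derivative).natDegree ≤ n := by
        have := natDegree_derivative_le (elephantR a (n+1))
        have := elephantR_natDegree_le a (n+1)
        omega
      omega

lemma elephantR_coeff_zero (a : ℝ) (n : ℕ) :
    (elephantR a (n+2)).coeff 0 = -(a / ((n:ℝ)+1)) * (elephantR a (n+1)).coeff 1 := by
  rw [elephantR]
  simp [coeff_sub, mul_coeff_zero, coeff_derivative]

lemma elephantR_coeff_succ (a : ℝ) (n j : ℕ) :
    (elephantR a (n+2)).coeff (j+1) =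
      (1 + (a / ((n:ℝ)+1)) * j) * (elephantR a (n+1)).coeff j
        - (a / ((n:ℝ)+1)) * ((j:ℝ)+2) * (elephantR a (n+1)).coeff (j+2) := by
  set c : ℝ := a / ((n:ℝ)+1)
  set p := elephantR a (n+1)
  have hX2 : (X^2 * p.derivative).coeff (j+1)
      = if 2 ≤ j+1 then p.derivative.coeff (j+1-2) else 0 := by
    rw [commute_X_pow p.derivative 2, coeff_mul_X_pow']
  rw [elephantR]
  rw [show elephantR a (n+1) = p from rfl, show a / ((n:ℝ)+1) = c from rfl]
  rw [sub_mul, one_mul, mul_sub]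
  simp only [coeff_sub, coeff_C_mul, coeff_X_mul, hX2, coeff_derivative]
  rcases j with _ | j'
  · simp; ring
  · push_cast
    ring

lemma elephantR_sign (a : ℝ) (ha : 0 ≤ a) :
    ∀ n k : ℕ, 2 * k ≤ n + 1 → 0 ≤ (-1 : ℝ) ^ k * (elephantR a (n+1)).coeff (n + 1 - 2 * k) := by
  intro n
  induction n with
  | zero =>
    intro k hk
    have hk0 : k = 0 := by omega
    subst hk0
    simp [elephantR]
  | succ m ih =>
    intro k hk
    have hc : 0 ≤ a / ((m:ℝ)+1) := div_nonneg ha (by positivity)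
    set c : ℝ := a / ((m:ℝ)+1) with hcdef
    rcases eq_or_lt_of_le hk with heq | hlt
    · -- 2k = m+2, index 0
      have hk1 : 1 ≤ k := by omega
      have hidx : m + 2 - 2 * k = 0 := by omega
      rw [hidx, elephantR_coeff_zero]
      have h1 : m + 1 - 2 * (k - 1) = 1 := by omega
      have := ih (k-1) (by omega)
      rw [h1] at this
      have hkk : (-1 : ℝ) ^ k = -(-1 : ℝ)^(k-1) := by
        conv_lhs => rw [show k = (k-1)+1 from by omega]
        rw [pow_succ]; ring
      rw [hkk]
      calc (0:ℝ) ≤ c * ((-1 : ℝ)^(k-1) * (elephantR a (m+1)).coeff 1) :=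
            mul_nonneg hc this
        _ = - (-1:ℝ)^(k-1) * (-c * (elephantR a (m+1)).coeff 1) := by ring
    · -- 2k ≤ m+1
      have hk' : 2 * k ≤ m + 1 := by omega
      set j := m + 1 - 2 * k with hjdef
      have hidx : m + 2 - 2 * k = j + 1 := by omega
      rw [hidx, elephantR_coeff_succ]
      have h1 : 0 ≤ (-1:ℝ)^k * (elephantR a (m+1)).coeff j := by
        have := ih k hk'; rwa [← hjdef] at this
      have h2 : 0 ≤ -((-1:ℝ)^k) * (elephantR a (m+1)).coeff (j+2) := by
        rcases Nat.eq_zero_or_pos k with hk0 | hkpos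
        · subst hk0
          have hz : (elephantR a (m+1)).coeff (j+2) = 0 := by
            apply coeff_eq_zero_of_natDegree_lt
            have := elephantR_natDegree_le a (m+1)
            omega
          simp [hz]
        · have hj2 : j + 2 = m + 1 - 2 * (k-1) := by omega
          have := ih (k-1) (by omega)
          rw [← hj2] at this
          have hkk : -((-1 : ℝ) ^ k) = (-1 : ℝ)^(k-1) := by
            conv_lhs => rw [show k = (k-1)+1 from by omega]
            rw [pow_succ]; ring
          rw [hkk]
          exact this
      have hpos1 : (0:ℝ) ≤ 1 + c * j := by positivity
      have hpos2 : (0:ℝ) ≤ c * ((j:ℝ)+2) := by positivity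
      nlinarith [mul_nonneg hpos1 h1, mul_nonneg hpos2 h2]

theorem stmt_10 (a : ℝ) (ha : 0 ≤ a) (n : ℕ) (hn : 1 ≤ n) (k : ℕ) (hk : 2 * k ≤ n) :
    0 ≤ (-1 : ℝ) ^ k * (elephantR a n).coeff (n - 2 * k) := by
  obtain ⟨m, rfl⟩ : ∃ m, n = m + 1 := ⟨n - 1, by omega⟩
  exact elephantR_sign a ha m k (by omega)
end

section
/- For a ∈ [−1, 0] and every n ≥ 1, all coefficients of the elephant polynomial R_n are nonnegative. -/
open Polynomial

lemma elephant_main (a : ℝ) (ha1 : -1 ≤ a) (ha0 : a ≤ 0) :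
    ∀ n : ℕ, (∀ k, 0 ≤ (elephantR a (n+1)).coeff k) ∧
      (∀ k, n + 1 < k → (elephantR a (n+1)).coeff k = 0) := by
  intro n
  induction n with
  | zero =>
    constructor <;> intro k
    · simp only [elephantR, coeff_X]
      split <;> norm_num
    · intro hk
      simp only [elephantR, coeff_X]
      rw [if_neg]
      omega
  | succ n ih =>
    obtain ⟨hpos, hdeg⟩ := ih
    set p := elephantR a (n+1) with hp
    set b := a / ((n:ℝ)+1) with hbdef
    have hnpos : (0:ℝ) < (n:ℝ) + 1 := by positivity
    have hb0 : b ≤ 0 := by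
      rw [hbdef]
      exact div_nonpos_of_nonpos_of_nonneg ha0 hnpos.le
    have hb1 : -1 ≤ b * ((n:ℝ)+1) := by
      rw [hbdef, div_mul_cancel₀]
      · exact ha1
      · exact ne_of_gt hnpos
    have hco : ∀ k, (elephantR a (n+1+1)).coeff k =
        (X * p).coeff k - b * ((derivative p).coeff k - (X^2 * derivative p).coeff k) := by
      intro k
      show (X * p - C b * ((1 - X^2) * derivative p)).coeff k = _
      simp [sub_mul, one_mul, coeff_sub, coeff_C_mul, mul_sub]
    constructor
    · intro k
      rw [hco k]
      match k with
      | 0 =>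
        simp only [mul_coeff_zero, coeff_X_zero, zero_mul, coeff_derivative, coeff_X_pow]
        norm_num
        nlinarith [hpos 1]
      | 1 =>
        rw [coeff_X_mul, coeff_derivative]
        have h1 : ((X:Polynomial ℝ)^2 * derivative p).coeff 1 = 0 := by
          rw [sq, mul_assoc, show (1:ℕ) = 0 + 1 from rfl, coeff_X_mul, mul_coeff_zero,
            coeff_X_zero, zero_mul]
        rw [h1]
        nlinarith [hpos 0, hpos 2, mul_nonneg (neg_nonneg.2 hb0) (hpos 2)]
      | (m+2) =>
        rw [coeff_X_mul, coeff_derivative, show m + 2 = m + 2 from rfl,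
          coeff_X_pow_mul (derivative p) 2 m, coeff_derivative]
        push_cast
        by_cases hm : m + 1 ≤ n + 1
        · have hm' : (m:ℝ) + 1 ≤ (n:ℝ) + 1 := by exact_mod_cast hm
          have key : 0 ≤ 1 + b * ((m:ℝ)+1) := by nlinarith
          nlinarith [hpos (m+1), hpos (m+3), mul_nonneg (hpos (m+1)) key,
            mul_nonneg (mul_nonneg (neg_nonneg.2 hb0) (hpos (m+3)))
              (by positivity : (0:ℝ) ≤ (m:ℝ)+2+1)]
        · have h1 : p.coeff (m+1) = 0 := hdeg _ (by omega)
          rw [h1]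
          have := mul_nonneg (mul_nonneg (neg_nonneg.2 hb0) (hpos (m+3)))
              (by positivity : (0:ℝ) ≤ (m:ℝ)+2+1)
          nlinarith
    · intro k hk
      rw [hco k]
      match k, hk with
      | (m+2), hk =>
        rw [coeff_X_mul, coeff_derivative,
          coeff_X_pow_mul (derivative p) 2 m, coeff_derivative]
        rw [hdeg (m+1) (by omega), hdeg (m+2+1) (by omega)]
        ring

theorem stmt_11 (a : ℝ) (ha : a ∈ Set.Icc (-1 : ℝ) 0) (n : ℕ) (hn : 1 ≤ n) (k : ℕ) :
    0 ≤ (elephantR a n).coeff k := by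
  obtain ⟨m, rfl⟩ := Nat.exists_eq_add_of_le hn
  have := (elephant_main a ha.1 ha.2 m).1 k
  rwa [Nat.add_comm]
end

section
/- Let a > 0. For every n ≥ 1, the elephant polynomial R_n has exactly n real roots, which are mutually distinct and all lie in the open interval (−1, 1). Moreover the roots of R_n and those of R_{n+1} strictly interlace: between any two consecutive roots of R_{n+1} there is exactly one root of R_n. -/
open Polynomial

open Finset in
lemma neg_of_sign_pow {x y : ℝ} {p q : ℕ} (hx : 0 < (-1:ℝ)^p * x) (hy : 0 < (-1:ℝ)^q * y)
    (h : Odd (p+q)) : x * y < 0 := by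
  have h1 := mul_pos hx hy
  have h2 : (-1:ℝ)^p * (-1)^q = -1 := by rw [← pow_add]; exact Odd.neg_one_pow h
  rw [show (-1:ℝ)^p*x*((-1:ℝ)^q*y) = (-1:ℝ)^p*(-1)^q*(x*y) from by ring, h2] at h1
  linarith

lemma exists_root_between (p : ℝ[X]) {u v : ℝ} (huv : u < v)
    (h : eval u p * eval v p < 0) : ∃ x ∈ Set.Ioo u v, eval x p = 0 := by
  have hc : ContinuousOn (fun x => eval x p) (Set.Icc u v) := p.continuous.continuousOn
  rcases lt_trichotomy (eval u p) 0 with h1 | h1 | h1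
  · have h2 : 0 < eval v p := by nlinarith
    obtain ⟨x, hx, hx0⟩ := intermediate_value_Ioo huv.le hc (Set.mem_Ioo.mpr ⟨h1, h2⟩)
    exact ⟨x, hx, hx0⟩
  · rw [h1] at h; simp at h
  · have h2 : eval v p < 0 := by nlinarith
    obtain ⟨x, hx, hx0⟩ := intermediate_value_Ioo' huv.le hc (Set.mem_Ioo.mpr ⟨h2, h1⟩)
    exact ⟨x, hx, hx0⟩

lemma prod_neg'' {ι : Type*} (s : Finset ι) (f : ι → ℝ) :
    ∏ i ∈ s, (-f i) = (-1)^s.card * ∏ i ∈ s, f i := by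
  rw [show (fun i => -f i) = fun i => (-1) * f i from by funext i; ring,
    Finset.prod_mul_distrib, Finset.prod_const]

lemma erase_split {N : ℕ} (k : Fin N) :
    Finset.univ.erase k = Finset.Iio k ∪ Finset.Ioi k := by
  ext j
  simp only [Finset.mem_erase, Finset.mem_univ, and_true, Finset.mem_union, Finset.mem_Iio,
    Finset.mem_Ioi]
  exact ne_iff_lt_or_gt

lemma erase_prod_sign {N : ℕ} (α : Fin N → ℝ) (hα : StrictMono α) (k : Fin N) :
    ∃ P : ℝ, 0 < P ∧ ∏ j ∈ Finset.univ.erase k, (α k - α j) = (-1)^(N - 1 - (k:ℕ)) * P := by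
  have hdisj : Disjoint (Finset.Iio k) (Finset.Ioi k) := by
    refine Finset.disjoint_left.mpr fun j h1 h2 => ?_
    simp only [Finset.mem_Iio, Finset.mem_Ioi] at h1 h2
    exact absurd h1 (not_lt.mpr h2.le)
  have hP1 : 0 < ∏ j ∈ Finset.Iio k, (α k - α j) :=
    Finset.prod_pos fun j hj => sub_pos.mpr (hα (Finset.mem_Iio.mp hj))
  have hP2 : 0 < ∏ j ∈ Finset.Ioi k, (α j - α k) :=
    Finset.prod_pos fun j hj => sub_pos.mpr (hα (Finset.mem_Ioi.mp hj))
  refine ⟨(∏ j ∈ Finset.Iio k, (α k - α j)) * ∏ j ∈ Finset.Ioi k, (α j - α k),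
    mul_pos hP1 hP2, ?_⟩
  rw [erase_split, Finset.prod_union hdisj]
  have : ∏ j ∈ Finset.Ioi k, (α k - α j) = (-1)^(N - 1 - (k:ℕ)) * ∏ j ∈ Finset.Ioi k, (α j - α k) := by
    rw [show (fun j => α k - α j) = (fun j => -(α j - α k)) from by funext j; ring,
      prod_neg'', Fin.card_Ioi]
  rw [this]; ring


open Finset in
lemma elephant_step (a c : ℝ) (ha : 0 < a) (hc : 0 < c) (m : ℕ)
    (α : Fin (m+1) → ℝ) (hα : StrictMono α) (hmem : ∀ k, α k ∈ Set.Ioo (-1:ℝ) 1)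
    (hfac : elephantR a (m+1) = C c * ∏ k, (X - C (α k))) :
    ∃ β : Fin (m+2) → ℝ, StrictMono β ∧ (∀ k, β k ∈ Set.Ioo (-1:ℝ) 1) ∧
      (∀ k : Fin (m+1), β k.castSucc < α k ∧ α k < β k.succ) ∧
      elephantR a (m+2) = C ((1+a)*c) * ∏ k, (X - C (β k)) := by
  set p := elephantR a (m+1) with hp
  have hrec : elephantR a (m+2) = X * p - C (a/((m:ℝ)+1)) * ((1 - X^2) * derivative p) := rfl
  have heval : ∀ x : ℝ, eval x (elephantR a (m+2)) =
      x * eval x p - (a/((m:ℝ)+1)) * ((1 - x^2) * eval x (derivative p)) := by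
    intro x; rw [hrec]; simp
  have hpeval : ∀ x : ℝ, eval x p = c * ∏ j, (x - α j) := by
    intro x; rw [hfac]; simp [eval_prod]
  have hdp : ∀ k : Fin (m+1), eval (α k) (derivative p) =
      c * ∏ j ∈ Finset.univ.erase k, (α k - α j) := by
    intro k
    have hsplit : ∏ j, (X - C (α j)) =
        (X - C (α k)) * ∏ j ∈ Finset.univ.erase k, (X - C (α j)) :=
      (Finset.mul_prod_erase _ _ (Finset.mem_univ k)).symm
    rw [hfac, hsplit]
    simp [derivative_mul, eval_prod]
  have hM : (0:ℝ) < (m:ℝ)+1 := by positivity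
  have signLast : 0 < eval 1 (elephantR a (m+2)) := by
    have hT : 0 < ∏ j, (1 - α j) :=
      Finset.prod_pos fun j _ => by have := (hmem j).2; linarith
    have : eval 1 (elephantR a (m+2)) = c * ∏ j, (1 - α j) := by
      rw [heval, hpeval]; ring
    rw [this]; exact mul_pos hc hT
  have sign0 : 0 < (-1:ℝ)^(m+2) * eval (-1) (elephantR a (m+2)) := by
    have hT : 0 < ∏ j, (1 + α j) :=
      Finset.prod_pos fun j _ => by have := (hmem j).1; linarith
    have hprod : ∏ j, ((-1:ℝ) - α j) = (-1)^(m+1) * ∏ j, (1 + α j) := by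
      rw [show (fun j => (-1:ℝ) - α j) = fun j => -(1 + α j) from by funext j; ring,
        prod_neg'']
      simp
    have hpow : (-1:ℝ)^(m+2) * (-1)^(m+1) = -1 := by
      rw [← pow_add]; exact Odd.neg_one_pow ⟨m+1, by ring⟩
    have key : (-1:ℝ)^(m+2) * eval (-1) (elephantR a (m+2)) = c * ∏ j, (1 + α j) := by
      rw [heval, hpeval, hprod]
      linear_combination (-(c * (∏ j, (1 + α j)))) * hpow
    rw [key]; exact mul_pos hc hT
  have signMid : ∀ k : Fin (m+1),
      0 < (-1:ℝ)^((k:ℕ)+(m+1)) * eval (α k) (elephantR a (m+2)) := by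
    intro k
    obtain ⟨P, hP, hPe⟩ := erase_prod_sign α hα k
    have h0 : eval (α k) p = 0 := by
      have hz : ∏ j, (α k - α j) = 0 :=
        Finset.prod_eq_zero (Finset.mem_univ k) (sub_self _)
      rw [hpeval, hz, mul_zero]
    have hk : (k:ℕ) ≤ m := Nat.lt_succ_iff.mp k.isLt
    have hpow : (-1:ℝ)^((k:ℕ)+(m+1)) * (-1)^(m+1 - 1 - (k:ℕ)) = -1 := by
      rw [← pow_add]; exact Odd.neg_one_pow ⟨m, by omega⟩
    have key : (-1:ℝ)^((k:ℕ)+(m+1)) * eval (α k) (elephantR a (m+2)) =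
        (a/((m:ℝ)+1)) * ((1 - (α k)^2) * (c * P)) := by
      rw [heval, h0, hdp, hPe]
      linear_combination (-((a/((m:ℝ)+1)) * ((1 - (α k)^2) * (c * P)))) * hpow
    rw [key]
    have h1 : 0 < 1 - (α k)^2 := by
      have h2 := (hmem k).1; have h3 := (hmem k).2; nlinarith
    have := mul_pos hc hP
    positivity
  set s : Fin (m+3) → ℝ := Fin.cons (-1) (Fin.snoc α 1) with hs
  have hs0 : s 0 = -1 := rfl
  have hslast : s (Fin.last (m+2)) = 1 := by
    rw [← Fin.succ_last, hs, Fin.cons_succ, Fin.snoc_last]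
  have hsmid : ∀ k : Fin (m+1), s k.succ.castSucc = α k := by
    intro k; rw [← Fin.succ_castSucc, hs, Fin.cons_succ, Fin.snoc_castSucc]
  have hlt : ∀ i : Fin (m+2), s i.castSucc < s i.succ := by
    intro i
    refine Fin.cases ?_ ?_ i
    · have h1 : (0:Fin (m+2)).succ = (0:Fin (m+1)).succ.castSucc := by
        rw [← Fin.succ_castSucc, Fin.castSucc_zero]
      rw [Fin.castSucc_zero, hs0, h1, hsmid]
      exact (hmem 0).1
    · intro j
      refine Fin.lastCases ?_ ?_ j
      · show s (Fin.last (m+1)).castSucc < s (Fin.last (m+1)).succ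
        rw [show ((Fin.last (m+1)).succ : Fin (m+3)) = Fin.last (m+2) from rfl, hslast,
          show (Fin.last (m+1) : Fin (m+2)) = (Fin.last m).succ from rfl, hsmid]
        exact (hmem (Fin.last m)).2
      · intro t
        rw [hsmid, Fin.succ_castSucc, Fin.succ_castSucc, hsmid]
        exact hα (Fin.castSucc_lt_succ (i := t))
  have hsmono : StrictMono s := Fin.strictMono_iff_lt_succ.mpr hlt
  have hsign : ∀ i : Fin (m+3),
      0 < (-1:ℝ)^((i:ℕ)+(m+2)) * eval (s i) (elephantR a (m+2)) := by
    intro i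
    refine Fin.cases ?_ ?_ i
    · rw [hs0]; simpa using sign0
    · intro j
      refine Fin.lastCases ?_ ?_ j
      · rw [Fin.succ_last, hslast]
        have h1 : (((Fin.last (m+2)) : Fin (m+3)) : ℕ) = m+2 := rfl
        rw [h1, show (-1:ℝ)^(m+2+(m+2)) = 1 from Even.neg_one_pow ⟨m+2, by ring⟩, one_mul]
        exact signLast
      · intro t
        rw [Fin.succ_castSucc, hsmid]
        have h1 : ((t.succ.castSucc : Fin (m+3)) : ℕ) = (t:ℕ)+1 := rfl
        rw [h1, show (-1:ℝ)^((t:ℕ)+1+(m+2)) = (-1:ℝ)^((t:ℕ)+(m+1)) from by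
          rw [show (t:ℕ)+1+(m+2) = ((t:ℕ)+(m+1))+2 from by ring, pow_add]; norm_num]
        exact signMid t
  have hneg : ∀ i : Fin (m+2),
      eval (s i.castSucc) (elephantR a (m+2)) * eval (s i.succ) (elephantR a (m+2)) < 0 := by
    intro i
    refine neg_of_sign_pow (hsign i.castSucc) (hsign i.succ) ?_
    rw [Fin.coe_castSucc, Fin.val_succ]
    exact ⟨(i:ℕ)+m+2, by ring⟩
  have hroot : ∀ i : Fin (m+2), ∃ x ∈ Set.Ioo (s i.castSucc) (s i.succ),
      eval x (elephantR a (m+2)) = 0 := fun i => exists_root_between _ (hlt i) (hneg i)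
  choose β hβmem hβroot using hroot
  have hβmono : StrictMono β := by
    refine Fin.strictMono_iff_lt_succ.mpr fun i => ?_
    calc β i.castSucc < s i.castSucc.succ := (hβmem i.castSucc).2
      _ = s i.succ.castSucc := by rw [Fin.succ_castSucc]
      _ < β i.succ := (hβmem i.succ).1
  have hinter : ∀ k : Fin (m+1), β k.castSucc < α k ∧ α k < β k.succ := by
    intro k
    constructor
    · calc β k.castSucc < s k.castSucc.succ := (hβmem k.castSucc).2
        _ = α k := by rw [Fin.succ_castSucc, hsmid]
    · calc α k = s k.succ.castSucc := (hsmid k).symm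
        _ < β k.succ := (hβmem k.succ).1
  have hβIoo : ∀ i, β i ∈ Set.Ioo (-1:ℝ) 1 := by
    intro i
    constructor
    · calc (-1:ℝ) = s 0 := hs0.symm
        _ ≤ s i.castSucc := hsmono.monotone (Fin.zero_le _)
        _ < β i := (hβmem i).1
    · calc β i < s i.succ := (hβmem i).2
        _ ≤ s (Fin.last (m+2)) := hsmono.monotone (Fin.le_last _)
        _ = 1 := hslast
  have hQm : (∏ k : Fin (m+1), (X - C (α k)) : ℝ[X]).Monic :=
    monic_prod_of_monic _ _ fun k _ => monic_X_sub_C _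
  have hQdeg : (∏ k : Fin (m+1), (X - C (α k)) : ℝ[X]).natDegree = m+1 := by
    rw [natDegree_prod_of_monic _ _ fun k _ => monic_X_sub_C _]
    simp [natDegree_X_sub_C]
  have hpdeg : p.natDegree = m+1 := by
    rw [hfac, natDegree_C_mul hc.ne', hQdeg]
  have hpcoeff : p.coeff (m+1) = c := by
    have h1 := hQm.coeff_natDegree
    rw [hQdeg] at h1
    rw [hfac, coeff_C_mul, h1, mul_one]
  have hdpdeg : (derivative p).natDegree ≤ m := by
    refine (natDegree_derivative_le p).trans ?_
    rw [hpdeg]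
    omega
  have e1 : (X * p).coeff (m+2) = c := by
    rw [show (m+2) = (m+1)+1 from rfl, coeff_X_mul, hpcoeff]
  have e2 : ((1 - X^2 : ℝ[X]) * derivative p).coeff (m+2) = -(c*((m:ℝ)+1)) := by
    rw [sub_mul, one_mul, coeff_sub,
      coeff_eq_zero_of_natDegree_lt (lt_of_le_of_lt hdpdeg (by omega)),
      coeff_X_pow_mul, coeff_derivative, hpcoeff]
    push_cast
    ring
  have hcoeffR : (elephantR a (m+2)).coeff (m+2) = (1+a)*c := by
    rw [hrec, coeff_sub, coeff_C_mul, e1, e2]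
    have hMne : ((m:ℝ)+1) ≠ 0 := by positivity
    field_simp
    ring
  have hlcpos : (0:ℝ) < (1+a)*c := mul_pos (by linarith) hc
  have hRdegle : (elephantR a (m+2)).natDegree ≤ m+2 := by
    have h4 : (X * p).natDegree ≤ m+2 := by
      refine natDegree_mul_le.trans ?_
      rw [natDegree_X, hpdeg]
      omega
    have h3 : (1 - X^2 : ℝ[X]).natDegree ≤ 2 :=
      (natDegree_sub_le _ _).trans (max_le (by simp) (by simp))
    have h5 : ((C (a/((m:ℝ)+1)) : ℝ[X]) * ((1 - X^2) * derivative p)).natDegree ≤ m+2 := by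
      refine natDegree_mul_le.trans ?_
      have h6 : ((1 - X^2 : ℝ[X]) * derivative p).natDegree ≤ m+2 := by
        refine natDegree_mul_le.trans ?_
        omega
      rw [natDegree_C]
      omega
    rw [hrec]
    exact (natDegree_sub_le _ _).trans (max_le h4 h5)
  have hRdeg : (elephantR a (m+2)).natDegree = m+2 :=
    le_antisymm hRdegle (le_natDegree_of_ne_zero (by rw [hcoeffR]; exact hlcpos.ne'))
  have hRlc : (elephantR a (m+2)).leadingCoeff = (1+a)*c := by
    rw [leadingCoeff, hRdeg, hcoeffR]
  have hRne : elephantR a (m+2) ≠ 0 :=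
    leadingCoeff_ne_zero.mp (by rw [hRlc]; exact hlcpos.ne')
  have hdvd : (∏ k : Fin (m+2), (X - C (β k))) ∣ elephantR a (m+2) := by
    refine Fintype.prod_dvd_of_coprime (pairwise_coprime_X_sub_C hβmono.injective) fun k => ?_
    exact dvd_iff_isRoot.mpr (hβroot k)
  obtain ⟨r, hr⟩ := hdvd
  have hQ'm : (∏ k : Fin (m+2), (X - C (β k)) : ℝ[X]).Monic :=
    monic_prod_of_monic _ _ fun k _ => monic_X_sub_C _
  have hQ'deg : (∏ k : Fin (m+2), (X - C (β k)) : ℝ[X]).natDegree = m+2 := by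
    rw [natDegree_prod_of_monic _ _ fun k _ => monic_X_sub_C _]
    simp [natDegree_X_sub_C]
  have hrne : r ≠ 0 := by
    rintro rfl
    rw [mul_zero] at hr
    exact hRne hr
  have hrdeg : r.natDegree = 0 := by
    have h7 := hRdeg
    rw [hr, natDegree_mul hQ'm.ne_zero hrne, hQ'deg] at h7
    omega
  have hrC : r = C ((1+a)*c) := by
    have h1 : r = C (r.coeff 0) := eq_C_of_natDegree_eq_zero hrdeg
    have h2 : r.coeff 0 = (1+a)*c := by
      have h8 := hRlc
      rw [hr, leadingCoeff_mul, hQ'm.leadingCoeff, one_mul, leadingCoeff, hrdeg] at h8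
      exact h8
    rw [h1, h2]
  have hRfac : elephantR a (m+2) = C ((1+a)*c) * ∏ k : Fin (m+2), (X - C (β k)) := by
    rw [hr, hrC, mul_comm]
  exact ⟨β, hβmono, hβIoo, hinter, hRfac⟩

open Finset in
lemma elephant_inv (a : ℝ) (ha : 0 < a) (m : ℕ) :
    ∃ (c : ℝ) (α : Fin (m+1) → ℝ), 0 < c ∧ StrictMono α ∧
      (∀ k, α k ∈ Set.Ioo (-1:ℝ) 1) ∧
      elephantR a (m+1) = C c * ∏ k, (X - C (α k)) := by
  induction m with
  | zero =>
      refine ⟨1, fun _ => 0, one_pos, ?_, ?_, ?_⟩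
      · intro i j hij
        exact absurd (Fin.fin_one_eq_zero i ▸ Fin.fin_one_eq_zero j ▸ rfl) hij.ne
      · intro k
        constructor <;> norm_num
      · simp [elephantR]
  | succ m ih =>
      obtain ⟨c, α, hc, hα, hmem, hfac⟩ := ih
      obtain ⟨β, hβmono, hβIoo, _, hRfac⟩ := elephant_step a c ha hc m α hα hmem hfac
      exact ⟨(1+a)*c, β, mul_pos (by linarith) hc, hβmono, hβIoo, hRfac⟩

open Finset in
lemma roots_from_fac {c : ℝ} (hc : c ≠ 0) {N : ℕ} {q : ℝ[X]} (γ : Fin N → ℝ)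
    (hfac : q = C c * ∏ k, (X - C (γ k))) :
    (∀ k, eval (γ k) q = 0) ∧ (∀ x : ℝ, eval x q = 0 → ∃ k, x = γ k) := by
  constructor
  · intro k
    rw [hfac]
    simp only [eval_mul, eval_C, eval_prod, eval_sub, eval_X]
    have hz : ∏ x : Fin N, (γ k - γ x) = 0 :=
      Finset.prod_eq_zero (Finset.mem_univ k) (sub_self (γ k))
    rw [hz, mul_zero]
  · intro x hx
    rw [hfac] at hx
    simp only [eval_mul, eval_C, eval_prod, eval_sub, eval_X, mul_eq_zero] at hx
    rcases hx with hx | hx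
    · exact absurd hx hc
    · obtain ⟨k, _, hk⟩ := Finset.prod_eq_zero_iff.mp hx
      exact ⟨k, by linarith [sub_eq_zero.mp hk]⟩

theorem stmt_13 (a : ℝ) (ha : 0 < a) (n : ℕ) (hn : 1 ≤ n) :
    ∃ (α : Fin n → ℝ) (β : Fin (n + 1) → ℝ),
      StrictMono α ∧ StrictMono β ∧
      (∀ k, α k ∈ Set.Ioo (-1 : ℝ) 1 ∧ (elephantR a n).eval (α k) = 0) ∧
      (∀ k, β k ∈ Set.Ioo (-1 : ℝ) 1 ∧ (elephantR a (n + 1)).eval (β k) = 0) ∧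
      (∀ x : ℝ, (elephantR a n).eval x = 0 → ∃ k, x = α k) ∧
      (∀ x : ℝ, (elephantR a (n + 1)).eval x = 0 → ∃ k, x = β k) ∧
      (∀ k : Fin n, β k.castSucc < α k ∧ α k < β k.succ) := by
  obtain ⟨m, rfl⟩ : ∃ m, n = m + 1 := ⟨n - 1, by omega⟩
  obtain ⟨c, α, hc, hα, hmem, hfac⟩ := elephant_inv a ha m
  obtain ⟨β, hβmono, hβIoo, hinter, hRfac⟩ := elephant_step a c ha hc m α hα hmem hfac
  obtain ⟨hαroot, hαall⟩ := roots_from_fac hc.ne' α hfac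
  obtain ⟨hβroot, hβall⟩ :=
    roots_from_fac (mul_pos (by linarith : (0:ℝ) < 1+a) hc).ne' β hRfac
  exact ⟨α, β, hα, hβmono, fun k => ⟨hmem k, hαroot k⟩, fun k => ⟨hβIoo k, hβroot k⟩,
    hαall, hβall, hinter⟩
end
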